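/- The operation ∘ on G'(r,t) is associative with two-sided identity (1,0,0), so G'(r,t) is a monoid. An element (x,y,z) ∈ G'(r,t) is invertible with respect to ∘ if and only if x is a unit of ℤ/2^{r+1} (equivalently, x is the class of an odd integer). Consequently, the group E'(r,t) of invertible elements of G'(r,t) has order 2^{r+2t+1} = 2^{t+r+min(r,t)+1}. -/

import Mathlib

section ChangAux

/-- Doubling map compatibility with natural number casts. -/
lemma chang_two_mul_cast (t n : ℕ) :
    (2 * (ZMod.cast ((n : ZMod (2 ^ t))) : ZMod (2 ^ (t + 1)))) =
      ((2 * n : ℕ) : ZMod (2 ^ (t + 1))) := by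
  have h2 : NeZero (2 ^ t) := ⟨pow_ne_zero _ two_ne_zero⟩
  rw [← ZMod.natCast_val, ZMod.val_natCast]
  have h := Nat.div_add_mod n (2 ^ t)
  have key : 2 * n = 2 ^ (t + 1) * (n / 2 ^ t) + 2 * (n % 2 ^ t) := by
    conv_lhs => rw [← h]
    ring
  rw [key, Nat.cast_add, Nat.cast_mul, ZMod.natCast_self, zero_mul, zero_add, Nat.cast_mul,
    Nat.cast_ofNat]

lemma chang_isUnit_iff (k : ℕ) (hk : 1 ≤ k) (x : ZMod (2 ^ k)) :
    IsUnit x ↔ Odd x.val := by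
  have h2 : NeZero (2 ^ k) := ⟨pow_ne_zero _ two_ne_zero⟩
  have h1 : IsUnit x ↔ Nat.Coprime x.val (2 ^ k) := by
    conv_lhs => rw [← ZMod.natCast_zmod_val x]
    exact ZMod.isUnit_iff_coprime _ _
  rw [h1, Nat.coprime_pow_right_iff (by omega), Nat.coprime_two_right]

lemma chang_odd_add_two_mul (n : ℕ) (hn : 2 ∣ n) [NeZero n] (u c : ZMod n) (h : Odd u.val) :
    Odd (u + 2 * c).val := by
  have h1 : (u + 2 * c).val % 2 = (u.val + (2 * c).val) % 2 := by
    rw [ZMod.val_add, Nat.mod_mod_of_dvd _ hn]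
  have h2 : (2 * c).val % 2 = 0 := by
    have hc : (2 : ZMod n) * c = c + c := by ring
    rw [hc, ZMod.val_add, Nat.mod_mod_of_dvd _ hn]
    omega
  rw [Nat.odd_iff] at *
  omega

/-- Units of a monoid are equivalent to the subtype of unit elements. -/
noncomputable def changUnitsEquiv (M : Type*) [Monoid M] : Mˣ ≃ {x : M // IsUnit x} where
  toFun u := ⟨u, u.isUnit⟩
  invFun s := s.2.unit
  left_inv u := Units.ext u.isUnit.unit_spec
  right_inv s := Subtype.ext s.2.unit_spec

end ChangAux

/-- The composition law of `[C,C]` for the elementary Chang complex `C = C^{n+2,t}_r`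
with `t < r`, in coordinates `ℤ/2^{r+1} × ℤ/2^{t+1} × ℤ/2^t`:
`(x,y,z)∘(x',y',z') = (x·x', π(x)·y' + π(x')·y + y'·μ(z), π(x)·z' + π(x')·z + 2·z·z')`,
where `π` denotes the canonical projections and `μ` the doubling map
`ℤ/2^t → ℤ/2^{t+1}`. -/
def changOp' (r t : ℕ) (htr : t ≤ r)
    (a b : ZMod (2 ^ (r + 1)) × ZMod (2 ^ (t + 1)) × ZMod (2 ^ t)) :
    ZMod (2 ^ (r + 1)) × ZMod (2 ^ (t + 1)) × ZMod (2 ^ t) :=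
  (a.1 * b.1,
   ZMod.castHom (pow_dvd_pow 2 (by omega : t + 1 ≤ r + 1)) (ZMod (2 ^ (t + 1))) a.1 * b.2.1
     + ZMod.castHom (pow_dvd_pow 2 (by omega : t + 1 ≤ r + 1)) (ZMod (2 ^ (t + 1))) b.1 * a.2.1
     + b.2.1 * (2 * (ZMod.cast a.2.2 : ZMod (2 ^ (t + 1)))),
   ZMod.castHom (pow_dvd_pow 2 (by omega : t ≤ r + 1)) (ZMod (2 ^ t)) a.1 * b.2.2
     + ZMod.castHom (pow_dvd_pow 2 (by omega : t ≤ r + 1)) (ZMod (2 ^ t)) b.1 * a.2.2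
     + 2 * a.2.2 * b.2.2)

/-- For `r > t ≥ 1`, the operation `∘` on `G'(r,t) = ℤ/2^{r+1} × ℤ/2^{t+1} × ℤ/2^t` is
associative with two-sided identity `(1,0,0)`; an element `(x,y,z)` is invertible iff
`x` is a unit of `ℤ/2^{r+1}` (equivalently, the class of an odd integer); and the group
`E'(r,t)` of invertible elements has order `2^{r+2t+1} = 2^{t+r+min(r,t)+1}`. -/
theorem stmt4 (r t : ℕ) (ht : 1 ≤ t) (htr : t < r) :
    (∀ a b c : ZMod (2 ^ (r + 1)) × ZMod (2 ^ (t + 1)) × ZMod (2 ^ t),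
      changOp' r t htr.le (changOp' r t htr.le a b) c
        = changOp' r t htr.le a (changOp' r t htr.le b c)) ∧
    (∀ a : ZMod (2 ^ (r + 1)) × ZMod (2 ^ (t + 1)) × ZMod (2 ^ t),
      changOp' r t htr.le (1, 0, 0) a = a ∧ changOp' r t htr.le a (1, 0, 0) = a) ∧
    (∀ a : ZMod (2 ^ (r + 1)) × ZMod (2 ^ (t + 1)) × ZMod (2 ^ t),
      ((∃ b, changOp' r t htr.le a b = (1, 0, 0) ∧ changOp' r t htr.le b a = (1, 0, 0)) ↔
        IsUnit a.1)) ∧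
    (∀ a : ZMod (2 ^ (r + 1)) × ZMod (2 ^ (t + 1)) × ZMod (2 ^ t),
      IsUnit a.1 ↔ Odd a.1.val) ∧
    Nat.card {a : ZMod (2 ^ (r + 1)) × ZMod (2 ^ (t + 1)) × ZMod (2 ^ t) //
        ∃ b, changOp' r t htr.le a b = (1, 0, 0) ∧ changOp' r t htr.le b a = (1, 0, 0)}
      = 2 ^ (r + 2 * t + 1) ∧
    2 ^ (r + 2 * t + 1) = 2 ^ (t + r + min r t + 1) := by
  have hNe1 : NeZero (2 ^ (r + 1)) := ⟨pow_ne_zero _ two_ne_zero⟩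
  have hNe2 : NeZero (2 ^ (t + 1)) := ⟨pow_ne_zero _ two_ne_zero⟩
  have hNe3 : NeZero (2 ^ t) := ⟨pow_ne_zero _ two_ne_zero⟩
  -- associativity
  have hassoc : ∀ a b c : ZMod (2 ^ (r + 1)) × ZMod (2 ^ (t + 1)) × ZMod (2 ^ t),
      changOp' r t htr.le (changOp' r t htr.le a b) c
        = changOp' r t htr.le a (changOp' r t htr.le b c) := by
    rintro ⟨xa, ya, za⟩ ⟨xb, yb, zb⟩ ⟨xc, yc, zc⟩
    obtain ⟨na, rfl⟩ := ZMod.natCast_zmod_surjective xa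
    obtain ⟨nb, rfl⟩ := ZMod.natCast_zmod_surjective xb
    obtain ⟨nc, rfl⟩ := ZMod.natCast_zmod_surjective xc
    obtain ⟨pa, rfl⟩ := ZMod.natCast_zmod_surjective ya
    obtain ⟨pb, rfl⟩ := ZMod.natCast_zmod_surjective yb
    obtain ⟨pc, rfl⟩ := ZMod.natCast_zmod_surjective yc
    obtain ⟨qa, rfl⟩ := ZMod.natCast_zmod_surjective za
    obtain ⟨qb, rfl⟩ := ZMod.natCast_zmod_surjective zb
    obtain ⟨qc, rfl⟩ := ZMod.natCast_zmod_surjective zc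
    simp only [changOp', map_mul, map_natCast, Prod.mk.injEq]
    refine ⟨by ring, ?_, by ring⟩
    have hab : ((na : ZMod (2 ^ t)) * qb + (nb : ZMod (2 ^ t)) * qa + 2 * qa * qb)
        = ((na * qb + nb * qa + 2 * qa * qb : ℕ) : ZMod (2 ^ t)) := by push_cast; ring
    rw [hab]
    simp only [chang_two_mul_cast]
    push_cast
    ring
  -- identity
  have hid : ∀ a : ZMod (2 ^ (r + 1)) × ZMod (2 ^ (t + 1)) × ZMod (2 ^ t),
      changOp' r t htr.le (1, 0, 0) a = a ∧ changOp' r t htr.le a (1, 0, 0) = a := by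
    rintro ⟨x, y, z⟩
    constructor <;>
      simp [changOp', map_one, -ZMod.castHom_apply]
  -- flipping one-sided inverses using finiteness
  have hflip : ∀ a b : ZMod (2 ^ (r + 1)) × ZMod (2 ^ (t + 1)) × ZMod (2 ^ t),
      changOp' r t htr.le a b = (1, 0, 0) → changOp' r t htr.le b a = (1, 0, 0) := by
    intro a b hab
    have hsurj : Function.Surjective (fun x => changOp' r t htr.le a x) := by
      intro x
      exact ⟨changOp' r t htr.le b x, by simp only [← hassoc, hab, (hid x).1]⟩
    have hinj := Finite.injective_iff_surjective.mpr hsurj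
    apply hinj
    show changOp' r t htr.le a (changOp' r t htr.le b a) = changOp' r t htr.le a (1, 0, 0)
    rw [← hassoc, hab, (hid a).1, (hid a).2]
  -- unit criterion
  have hodd : ∀ a : ZMod (2 ^ (r + 1)) × ZMod (2 ^ (t + 1)) × ZMod (2 ^ t),
      IsUnit a.1 ↔ Odd a.1.val := fun a => chang_isUnit_iff (r + 1) (by omega) a.1
  -- invertibility criterion
  have hinv : ∀ a : ZMod (2 ^ (r + 1)) × ZMod (2 ^ (t + 1)) × ZMod (2 ^ t),
      ((∃ b, changOp' r t htr.le a b = (1, 0, 0) ∧ changOp' r t htr.le b a = (1, 0, 0)) ↔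
        IsUnit a.1) := by
    rintro ⟨x, y, z⟩
    constructor
    · rintro ⟨b, hab, -⟩
      have h1 := congrArg Prod.fst hab
      simp only [changOp'] at h1
      exact IsUnit.of_mul_eq_one _ h1
    · intro hu
      obtain ⟨u, hu0⟩ := hu
      have hu : (↑u : ZMod (2 ^ (r + 1))) = x := hu0
      set π : ZMod (2 ^ (r + 1)) →+* ZMod (2 ^ (t + 1)) :=
        ZMod.castHom (pow_dvd_pow 2 (by omega : t + 1 ≤ r + 1)) (ZMod (2 ^ (t + 1)))
      set ρ : ZMod (2 ^ (r + 1)) →+* ZMod (2 ^ t) :=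
        ZMod.castHom (pow_dvd_pow 2 (by omega : t ≤ r + 1)) (ZMod (2 ^ t))
      have hux : IsUnit x := ⟨u, hu0⟩
      have hπ : Odd (π x).val := by
        rw [← chang_isUnit_iff (t + 1) (by omega)]
        exact hux.map π
      have hρ : Odd (ρ x).val := by
        rw [← chang_isUnit_iff t ht]
        exact hux.map ρ
      have hv : IsUnit (π x + 2 * (ZMod.cast z : ZMod (2 ^ (t + 1)))) := by
        rw [chang_isUnit_iff (t + 1) (by omega)]
        exact chang_odd_add_two_mul _ (dvd_pow_self 2 (by omega : t + 1 ≠ 0)) _ _ hπ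
      have hw : IsUnit (ρ x + 2 * z) := by
        rw [chang_isUnit_iff t ht]
        exact chang_odd_add_two_mul _ (dvd_pow_self 2 (by omega : t ≠ 0)) _ _ hρ
      obtain ⟨v, hv⟩ := hv
      obtain ⟨w, hw⟩ := hw
      have hmain : changOp' r t htr.le (x, y, z) ((↑u⁻¹ : ZMod (2 ^ (r + 1))),
          -((↑v⁻¹ : ZMod (2 ^ (t + 1))) * (π ↑u⁻¹ * y)),
          -((↑w⁻¹ : ZMod (2 ^ t)) * (ρ ↑u⁻¹ * z))) = (1, 0, 0) := by
        simp only [changOp', Prod.mk.injEq]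
        refine ⟨by rw [← hu]; exact u.mul_inv, ?_, ?_⟩
        · have h1 : (↑v⁻¹ : ZMod (2 ^ (t + 1))) * ↑v = 1 := v.inv_mul
          linear_combination ((↑v⁻¹ : ZMod (2 ^ (t + 1))) * (π ↑u⁻¹ * y)) * hv
            + (-(π ↑u⁻¹ * y)) * h1
        · have h1 : (↑w⁻¹ : ZMod (2 ^ t)) * ↑w = 1 := w.inv_mul
          linear_combination ((↑w⁻¹ : ZMod (2 ^ t)) * (ρ ↑u⁻¹ * z)) * hw
            + (-(ρ ↑u⁻¹ * z)) * h1
      exact ⟨_, hmain, hflip _ _ hmain⟩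
  refine ⟨hassoc, hid, hinv, hodd, ?_, ?_⟩
  · -- cardinality
    have e1 : {a : ZMod (2 ^ (r + 1)) × ZMod (2 ^ (t + 1)) × ZMod (2 ^ t) //
          ∃ b, changOp' r t htr.le a b = (1, 0, 0) ∧ changOp' r t htr.le b a = (1, 0, 0)}
        ≃ {x : ZMod (2 ^ (r + 1)) // IsUnit x} × (ZMod (2 ^ (t + 1)) × ZMod (2 ^ t)) :=
      (Equiv.subtypeEquivRight fun a => hinv a).trans Equiv.prodSubtypeFstEquivSubtypeProd
    rw [Nat.card_congr e1, Nat.card_prod, Nat.card_prod,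
      Nat.card_congr (changUnitsEquiv (ZMod (2 ^ (r + 1)))).symm, Nat.card_eq_fintype_card,
      ZMod.card_units_eq_totient, Nat.totient_prime_pow Nat.prime_two (by omega),
      Nat.card_zmod, Nat.card_zmod]
    rw [show r + 1 - 1 = r from rfl, show 2 - 1 = 1 from rfl, mul_one, ← pow_add]
    have hexp : r + (t + 1 + t) = r + 2 * t + 1 := by omega
    rw [← pow_add, hexp]
  · congr 1
    rw [min_eq_right htr.le]
    omega
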